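/- Let a be a positive integer and let E be the equation a·x + a·y = z. Then for every positive integer n, M_E(n) ≤ ⌊n²/(2a⁴) + n/(2a²)⌋; that is, there exists a 2-coloring χ of [n] under which the number of monochromatic ordered triples (x,y,z) ∈ [n]³ with a·x + a·y = z is at most ⌊n²/(2a⁴) + n/(2a²)⌋ (floor of the rational number n²/(2a⁴) + n/(2a²)). -/

import Mathlib

/-- For `E : a·x + a·y = z`, there is a 2-coloring of `[n]` with at most
`⌊n²/(2a⁴) + n/(2a²)⌋` monochromatic solutions; i.e. `M_E(n) ≤ ⌊n²/(2a⁴) + n/(2a²)⌋`. -/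
theorem stmt0 (a : ℕ) (ha : 0 < a) (n : ℕ) (hn : 0 < n) :
    ∃ χ : ℕ → Fin 2,
      ((((Finset.Icc 1 n) ×ˢ (Finset.Icc 1 n) ×ˢ (Finset.Icc 1 n)).filter
        (fun p => a * p.1 + a * p.2.1 = p.2.2 ∧
          χ p.1 = χ p.2.1 ∧ χ p.2.1 = χ p.2.2)).card : ℤ)
      ≤ ⌊(n : ℚ) ^ 2 / (2 * (a : ℚ) ^ 4) + (n : ℚ) / (2 * (a : ℚ) ^ 2)⌋ := by
  classical
  set t : ℕ := n / (2 * a) + 1 with ht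
  set m : ℕ := t / a with hm
  refine ⟨fun x => if x ≤ t then 0 else 1, ?_⟩
  set F := (((Finset.Icc 1 n) ×ˢ (Finset.Icc 1 n) ×ˢ (Finset.Icc 1 n)).filter
        (fun p : ℕ × ℕ × ℕ => a * p.1 + a * p.2.1 = p.2.2 ∧
          (if p.1 ≤ t then (0 : Fin 2) else 1) = (if p.2.1 ≤ t then 0 else 1) ∧
          (if p.2.1 ≤ t then (0 : Fin 2) else 1) = (if p.2.2 ≤ t then 0 else 1))) with hF
  -- n < 2*a*t
  have h2at : n < 2 * a * t := by
    have h1 := Nat.div_add_mod n (2 * a)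
    have h2 : n % (2 * a) < 2 * a := Nat.mod_lt _ (by positivity)
    calc n = 2 * a * (n / (2 * a)) + n % (2 * a) := h1.symm
    _ < 2 * a * (n / (2 * a)) + 2 * a := by omega
    _ = 2 * a * t := by rw [ht]; ring
  -- every solution in F has a*(x+y) ≤ t, hence x+y ≤ m
  have hkey : ∀ p ∈ F, 1 ≤ p.1 ∧ 1 ≤ p.2.1 ∧ p.1 + p.2.1 ≤ m := by
    intro p hp
    rw [hF, Finset.mem_filter] at hp
    obtain ⟨hmem, heq, hxy, hyz⟩ := hp
    simp only [Finset.mem_product, Finset.mem_Icc] at hmem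
    obtain ⟨⟨hx1, hxn⟩, ⟨hy1, hyn⟩, ⟨hz1, hzn⟩⟩ := hmem
    refine ⟨hx1, hy1, ?_⟩
    by_cases hx : p.1 ≤ t <;> by_cases hy : p.2.1 ≤ t
    · -- both small, so z small
      by_cases hz : p.2.2 ≤ t
      · rw [Nat.le_div_iff_mul_le ha]
        calc (p.1 + p.2.1) * a = a * p.1 + a * p.2.1 := by ring
        _ = p.2.2 := heq
        _ ≤ t := hz
      · simp [hy, hz] at hyz
    · simp [hx, hy] at hxy
    · simp [hx, hy] at hxy
    · -- both large: z = a(x+y) ≥ 2a(t+1) > n, contradiction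
      exfalso
      have : 2 * a * t < a * p.1 + a * p.2.1 := by
        have hx' : t + 1 ≤ p.1 := by omega
        have hy' : t + 1 ≤ p.2.1 := by omega
        calc 2 * a * t < a * (t + 1) + a * (t + 1) := by nlinarith
        _ ≤ a * p.1 + a * p.2.1 := by
              exact Nat.add_le_add (Nat.mul_le_mul_left a hx') (Nat.mul_le_mul_left a hy')
      omega
  -- inject F into Icc 2 m ×ˢ Icc 1 (m-1)
  have hcard : F.card ≤ (m - 1) * (m - 1) := by
    have hinj : F.card ≤ ((Finset.Icc 2 m) ×ˢ (Finset.Icc 1 (m - 1))).card := by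
      apply Finset.card_le_card_of_injOn (fun p => (p.1 + p.2.1, p.1))
      · intro p hp
        obtain ⟨h1, h2, h3⟩ := hkey p hp
        simp only [Finset.mem_coe, Finset.mem_product, Finset.mem_Icc]
        omega
      · intro p hp q hq hpq
        simp only [Finset.mem_coe, hF, Finset.mem_filter] at hp hq
        obtain ⟨-, hpe, -⟩ := hp
        obtain ⟨-, hqe, -⟩ := hq
        simp only [Prod.mk.injEq] at hpq
        obtain ⟨h1, h2⟩ := hpq
        have hy : p.2.1 = q.2.1 := by omega
        have hz : p.2.2 = q.2.2 := by rw [← hpe, ← hqe, h2, hy]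
        exact Prod.ext h2 (Prod.ext hy hz)
    calc F.card ≤ _ := hinj
    _ = (m + 1 - 2) * (m - 1 + 1 - 1) := by
          rw [Finset.card_product, Nat.card_Icc, Nat.card_Icc]
    _ = (m - 1) * (m - 1) := by congr 1 <;> omega
  -- now the rational estimate
  rw [Int.le_floor]
  have hA : (1 : ℚ) ≤ (a : ℚ) := by exact_mod_cast ha
  have hN : (0 : ℚ) ≤ (n : ℚ) := by positivity
  have hmq : ((m - 1 : ℕ) : ℚ) ≤ (n : ℚ) / (2 * (a : ℚ) ^ 2) := by
    have h1 : ((m : ℕ) : ℚ) ≤ (t : ℚ) / (a : ℚ) := by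
      rw [hm]; exact_mod_cast Nat.cast_div_le
    have h2 : ((n / (2 * a) : ℕ) : ℚ) ≤ (n : ℚ) / (2 * (a : ℚ)) := by
      have := Nat.cast_div_le (α := ℚ) (m := n) (n := 2 * a)
      push_cast at this ⊢
      exact this
    have h3 : (t : ℚ) ≤ (n : ℚ) / (2 * (a : ℚ)) + 1 := by
      rw [ht]; push_cast; linarith
    have h4 : ((m : ℕ) : ℚ) ≤ (n : ℚ) / (2 * (a : ℚ) ^ 2) + 1 / (a : ℚ) := by
      have ha0 : (0 : ℚ) < (a : ℚ) := by linarith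
      calc ((m : ℕ) : ℚ) ≤ (t : ℚ) / (a : ℚ) := h1
      _ ≤ ((n : ℚ) / (2 * (a : ℚ)) + 1) / (a : ℚ) := by gcongr
      _ = (n : ℚ) / (2 * (a : ℚ) ^ 2) + 1 / (a : ℚ) := by
            field_simp
    rcases Nat.eq_zero_or_pos m with hm0 | hm1
    · have h0 : m - 1 = 0 := by omega
      rw [h0]
      simp only [Nat.cast_zero]
      positivity
    · have : ((m - 1 : ℕ) : ℚ) = (m : ℚ) - 1 := by
        have : (1 : ℕ) ≤ m := hm1
        push_cast [Nat.cast_sub this]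
        ring
      rw [this]
      have h5 : 1 / (a : ℚ) ≤ 1 := by
        rw [div_le_one (by linarith)]; exact hA
      linarith
  have hcq : ((F.card : ℤ) : ℚ) ≤ ((n : ℚ) / (2 * (a : ℚ) ^ 2)) ^ 2 := by
    have h0 : (0 : ℚ) ≤ ((m - 1 : ℕ) : ℚ) := by positivity
    have h1 : ((F.card : ℤ) : ℚ) ≤ ((m - 1 : ℕ) : ℚ) * ((m - 1 : ℕ) : ℚ) := by
      push_cast
      exact_mod_cast Nat.cast_le.mpr hcard
    calc ((F.card : ℤ) : ℚ) ≤ ((m - 1 : ℕ) : ℚ) * ((m - 1 : ℕ) : ℚ) := h1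
    _ ≤ ((n : ℚ) / (2 * (a : ℚ) ^ 2)) * ((n : ℚ) / (2 * (a : ℚ) ^ 2)) := by
          apply mul_le_mul hmq hmq h0 (by positivity)
    _ = ((n : ℚ) / (2 * (a : ℚ) ^ 2)) ^ 2 := by ring
  have hfin : ((n : ℚ) / (2 * (a : ℚ) ^ 2)) ^ 2 ≤
      (n : ℚ) ^ 2 / (2 * (a : ℚ) ^ 4) + (n : ℚ) / (2 * (a : ℚ) ^ 2) := by
    have ha0 : (0 : ℚ) < (a : ℚ) := by linarith
    have h1 : ((n : ℚ) / (2 * (a : ℚ) ^ 2)) ^ 2 = (n : ℚ) ^ 2 / (4 * (a : ℚ) ^ 4) := by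
      field_simp; ring
    have h2 : (n : ℚ) ^ 2 / (4 * (a : ℚ) ^ 4) ≤ (n : ℚ) ^ 2 / (2 * (a : ℚ) ^ 4) := by
      apply div_le_div_of_nonneg_left (by positivity) (by positivity)
      nlinarith [pow_pos ha0 4]
    have h3 : (0 : ℚ) ≤ (n : ℚ) / (2 * (a : ℚ) ^ 2) := by positivity
    linarith
  calc ((F.card : ℤ) : ℚ) ≤ _ := hcq
  _ ≤ _ := hfin
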